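/- If a quantum channel E with Kraus operators {E_i} admits a recovery channel R with R∘E(ρ) = ρ for all ρ supported on the code subspace C (ρ = P_C ρ P_C), then there exist scalars λ_ij such that P_C E_i† E_j P_C = λ_ij P_C for all i, j. -/

import Mathlib

open Matrix Finset
lemma trace_sum_eq_zero {ι : Type*} [Fintype ι] {n m : ℕ}
    (X : ι → Matrix (Fin n) (Fin m) ℂ)
    (h : ∑ k, ((X k)ᴴ * X k).trace = 0) : ∀ k, X k = 0 := by
  have key : ∀ (Y : Matrix (Fin n) (Fin m) ℂ),
      (Yᴴ * Y).trace = ((∑ j, ∑ i, Complex.normSq (Y i j) : ℝ) : ℂ) := by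
    intro Y
    push_cast
    simp only [Matrix.trace, Matrix.diag, Matrix.mul_apply, Matrix.conjTranspose_apply]
    congr 1; funext j; congr 1; funext i
    exact (Complex.normSq_eq_conj_mul_self).symm
  simp only [key] at h
  norm_cast at h
  have h' := (Finset.sum_eq_zero_iff_of_nonneg (by
    intro k _
    exact Finset.sum_nonneg fun j _ => Finset.sum_nonneg fun i _ => Complex.normSq_nonneg _)).mp h
  intro k
  ext i j
  have h2 := (Finset.sum_eq_zero_iff_of_nonneg (by
    intro j _
    exact Finset.sum_nonneg fun i _ => Complex.normSq_nonneg _)).mp (h' k (mem_univ k))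
  have h3 := (Finset.sum_eq_zero_iff_of_nonneg (by
    intro i _; exact Complex.normSq_nonneg _)).mp (h2 j (mem_univ j))
  simpa [Complex.normSq_eq_zero] using h3 i (mem_univ i)


theorem knill_laflamme_of_correctable (N r s : ℕ)
    (P : Matrix (Fin N) (Fin N) ℂ) (hP₁ : Pᴴ = P) (hP₂ : P * P = P)
    (E : Fin r → Matrix (Fin N) (Fin N) ℂ)
    (hE : ∑ i, (E i)ᴴ * E i = 1)
    (R : Fin s → Matrix (Fin N) (Fin N) ℂ)
    (hR : ∑ j, (R j)ᴴ * R j = 1)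
    (hcorr : ∀ ρ : Matrix (Fin N) (Fin N) ℂ, ρ = P * ρ * P →
      ∑ j, R j * (∑ i, E i * ρ * (E i)ᴴ) * (R j)ᴴ = ρ) :
    ∃ lam : Fin r → Fin r → ℂ, ∀ i j, P * (E i)ᴴ * E j * P = lam i j • P := by
  by_cases hP0 : P = 0
  · exact ⟨0, fun i j => by simp [hP0]⟩
  have hP₂' : ∀ Y, P * (P * Y) = P * Y := fun Y => by rw [← Matrix.mul_assoc, hP₂]
  set A : Fin s × Fin r → Matrix (Fin N) (Fin N) ℂ := fun k => R k.1 * E k.2 with hA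
  -- composed channel is identity on the corner
  have hΦ : ∀ ρ : Matrix (Fin N) (Fin N) ℂ, ρ = P * ρ * P →
      ∑ k, A k * ρ * (A k)ᴴ = ρ := by
    intro ρ hρ
    have step : ∑ k, A k * ρ * (A k)ᴴ
        = ∑ j, R j * (∑ i, E i * ρ * (E i)ᴴ) * (R j)ᴴ := by
      rw [Fintype.sum_prod_type]
      refine Finset.sum_congr rfl fun j _ => ?_
      rw [Finset.mul_sum, Finset.sum_mul]
      refine Finset.sum_congr rfl fun i _ => ?_
      simp [hA, conjTranspose_mul, Matrix.mul_assoc]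
    rw [step, hcorr ρ hρ]
  -- sum of A†A = 1
  have hA1 : ∑ k, (A k)ᴴ * A k = 1 := by
    rw [Fintype.sum_prod_type, Finset.sum_comm, ← hE]
    refine Finset.sum_congr rfl fun i _ => ?_
    have : ∑ j, (A (j, i))ᴴ * A (j, i)
        = (E i)ᴴ * (∑ j, (R j)ᴴ * R j) * E i := by
      rw [Finset.mul_sum, Finset.sum_mul]
      refine Finset.sum_congr rfl fun j _ => ?_
      simp [hA, conjTranspose_mul, Matrix.mul_assoc]
    rw [this, hR, Matrix.mul_one]
  -- step 1 : A k * P = P * (A k * P)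
  have hsumP : ∑ k, A k * P * (A k)ᴴ = P := hΦ P (by rw [hP₂, hP₂])
  have hstep1 : ∀ k, A k * P = P * (A k * P) := by
    have hzero : ∑ k, (A k * P - P * (A k * P)) * (A k * P - P * (A k * P))ᴴ = 0 := by
      have hexp : ∀ k, (A k * P - P * (A k * P)) * (A k * P - P * (A k * P))ᴴ
          = (1 - P) * (A k * P * (A k)ᴴ) * (1 - P) := by
        intro k
        simp only [conjTranspose_sub, conjTranspose_mul, hP₁, sub_mul, mul_sub,
          Matrix.mul_assoc, Matrix.one_mul, Matrix.mul_one, hP₂']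
      simp only [hexp]
      rw [← Finset.sum_mul, ← Finset.mul_sum, hsumP]
      simp [sub_mul, mul_sub, hP₂]
    have h0 := trace_sum_eq_zero (fun k => (A k * P - P * (A k * P))ᴴ) (by
      have : ∀ k : Fin s × Fin r,
          (((A k * P - P * (A k * P))ᴴ)ᴴ * (A k * P - P * (A k * P))ᴴ).trace
          = ((A k * P - P * (A k * P)) * (A k * P - P * (A k * P))ᴴ).trace := by
        intro k; rw [conjTranspose_conjTranspose]
      rw [Finset.sum_congr rfl fun k _ => this k, ← Matrix.trace_sum, hzero,
        Matrix.trace_zero])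
    intro k
    have := congrArg conjTranspose (h0 k)
    rw [conjTranspose_conjTranspose, conjTranspose_zero, sub_eq_zero] at this
    exact this
  set M : Fin s × Fin r → Matrix (Fin N) (Fin N) ℂ := fun k => A k * P with hM
  have hPM : ∀ k, P * M k = M k := fun k => (hstep1 k).symm
  -- sum of M†M = P, so traces sum to trace P
  have hMM : ∑ k, (M k)ᴴ * M k = P := by
    have hterm : ∀ k, (M k)ᴴ * M k = P * (((A k)ᴴ * A k) * P) := by
      intro k
      simp only [hM, conjTranspose_mul, hP₁, Matrix.mul_assoc, hP₂']
    simp only [hterm]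
    rw [← Finset.mul_sum, ← Finset.sum_mul, hA1, Matrix.one_mul, hP₂]
  have htrMM : ∑ k, ((M k)ᴴ * M k).trace = P.trace := by rw [← Matrix.trace_sum, hMM]
  -- identity II
  have hab : ∀ a b : Fin N, ∑ k, M k * single a b 1 * (M k)ᴴ
      = P * single a b 1 * P := by
    intro a b
    have hρ := hΦ (P * single a b 1 * P) (by
      simp only [Matrix.mul_assoc, hP₂', hP₂])
    rw [← hρ]
    refine Finset.sum_congr rfl fun k _ => ?_
    simp only [hM, conjTranspose_mul, hP₁, Matrix.mul_assoc]
  have hentry : ∀ a b : Fin N, ∑ k, (M k) a a * star ((M k) b b) = P a a * P b b := by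
    intro a b
    have h := hab a b
    rw [← Matrix.ext_iff] at h
    have h2 := h a b
    rw [Matrix.sum_apply] at h2
    have hent : ∀ (X Y : Matrix (Fin N) (Fin N) ℂ),
        (X * single a b (1:ℂ) * Y) a b = X a a * Y b b := by
      intro X Y
      simp [Matrix.mul_apply, Matrix.single, ite_mul, mul_ite, Finset.sum_mul,
        Finset.sum_ite_eq, Finset.sum_ite_eq', ite_and]
    simp only [hent, conjTranspose_apply] at h2
    simpa using h2
  have hII : ∑ k, (M k).trace * star ((M k).trace) = P.trace * P.trace := by
    have e1 : ∀ k : Fin s × Fin r, (M k).trace * star ((M k).trace)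
        = ∑ a, ∑ b, (M k) a a * star ((M k) b b) := by
      intro k
      simp [Matrix.trace, Matrix.diag, Finset.sum_mul, Finset.mul_sum, star_sum]
      rw [Finset.sum_comm]
    have e2 : P.trace * P.trace = ∑ a, ∑ b, P a a * P b b := by
      simp [Matrix.trace, Matrix.diag, Finset.sum_mul, Finset.mul_sum]
      rw [Finset.sum_comm]
    rw [e2]
    simp only [e1]
    rw [Finset.sum_comm]
    refine Finset.sum_congr rfl fun a _ => ?_
    rw [Finset.sum_comm]
    exact Finset.sum_congr rfl fun b _ => hentry a b
  -- trace P ≠ 0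
  have hd : P.trace ≠ 0 := by
    intro h
    apply hP0
    exact trace_sum_eq_zero (fun _ : Fin 1 => P) (by simp [hP₁, hP₂, h]) 0
  have hds : star P.trace = P.trace := by
    have := Matrix.trace_conjTranspose P
    rw [hP₁] at this
    exact this.symm
  -- variance argument
  set c : Fin s × Fin r → ℂ := fun k => (M k).trace / P.trace with hc
  have hMP : ∀ k, (M k)ᴴ * P = (M k)ᴴ := by
    intro k
    have := congrArg conjTranspose (hPM k)
    rw [conjTranspose_mul, hP₁] at this
    exact this
  have htr : ∀ k, ((M k - c k • P)ᴴ * (M k - c k • P)).trace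
      = ((M k)ᴴ * M k).trace - ((M k).trace * star ((M k).trace)) / P.trace := by
    intro k
    have expand : (M k - c k • P)ᴴ * (M k - c k • P)
        = (M k)ᴴ * M k - c k • ((M k)ᴴ * P) - star (c k) • (P * M k)
          + (c k * star (c k)) • (P * P) := by
      simp only [conjTranspose_sub, conjTranspose_smul, hP₁, sub_mul, mul_sub,
        Matrix.smul_mul, Matrix.mul_smul, smul_smul, RCLike.star_def]
      abel
    rw [expand, hMP k, hPM k, hP₂]
    rw [Matrix.trace_add, Matrix.trace_sub, Matrix.trace_sub, Matrix.trace_smul,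
      Matrix.trace_smul, Matrix.trace_smul]
    have htrMk : ((M k)ᴴ).trace = star ((M k).trace) := by
      rw [Matrix.trace_conjTranspose]
    rw [htrMk, hc]
    simp only [smul_eq_mul, star_div₀, hds]
    field_simp
    ring
  have hzero2 : ∑ k, ((M k - c k • P)ᴴ * (M k - c k • P)).trace = 0 := by
    simp only [htr]
    rw [Finset.sum_sub_distrib, htrMM, ← Finset.sum_div, hII]
    field_simp
    ring
  have hMc : ∀ k, M k = c k • P := by
    intro k
    have := trace_sum_eq_zero _ hzero2 k
    rwa [sub_eq_zero] at this
  -- finish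
  refine ⟨fun i i' => ∑ j, star (c (j, i)) * c (j, i'), fun i i' => ?_⟩
  have key : ∀ j i, R j * E i * P = c (j, i) • P := fun j i => hMc (j, i)
  have expand2 : P * (E i)ᴴ * E i' * P
      = ∑ j, (R j * E i * P)ᴴ * (R j * E i' * P) := by
    have e0 : P * (E i)ᴴ * E i' * P
        = P * ((E i)ᴴ * ((∑ j, (R j)ᴴ * R j) * (E i' * P))) := by
      rw [hR]
      simp [Matrix.mul_assoc]
    rw [e0]
    simp only [Finset.sum_mul, Finset.mul_sum]
    refine Finset.sum_congr rfl fun j _ => ?_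
    simp only [conjTranspose_mul, hP₁, Matrix.mul_assoc]
  rw [expand2]
  simp only [key]
  have final : ∀ j : Fin s, (c (j, i) • P)ᴴ * (c (j, i') • P)
      = (star (c (j, i)) * c (j, i')) • P := by
    intro j
    rw [conjTranspose_smul, hP₁, Matrix.smul_mul, Matrix.mul_smul, hP₂, smul_smul]
  rw [Finset.sum_congr rfl fun j _ => final j, ← Finset.sum_smul]
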